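/- Euler's identity: for |q| < 1 and |x| < 1 (or as an identity of formal power series in x and q), the sum over n ≥ 0 of x^n / ((1−q)(1−q^2)⋯(1−q^n)) equals the infinite product ∏_{j≥0} 1/(1 − x q^j). -/

import Mathlib

open Filter Topology Complex

lemma euler_ne (x q : ℂ) (hq : ‖q‖ < 1) (hx : ‖x‖ < 1) (j : ℕ) :
    1 - x * q ^ j ≠ 0 := by
  have h : ‖x * q ^ j‖ < 1 := by
    calc ‖x * q ^ j‖ = ‖x‖ * ‖q‖ ^ j := by simp [norm_mul, norm_pow]
    _ ≤ ‖x‖ * 1 := by gcongr; exact pow_le_one₀ (norm_nonneg q) hq.le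
    _ < 1 := by simpa using hx
  intro h0
  rw [sub_eq_zero] at h0
  rw [← h0] at h
  simp at h

lemma euler_hasProd (x q : ℂ) (hq : ‖q‖ < 1) (hx : ‖x‖ < 1) :
    HasProd (fun j : ℕ => 1 - x * q ^ j) (∏' j : ℕ, (1 - x * q ^ j)) ∧
      (∏' j : ℕ, (1 - x * q ^ j)) ≠ 0 := by
  have hne := euler_ne x q hq hx
  have hsum : Summable fun j : ℕ => Complex.log (1 - x * q ^ j) := by
    have hgeo : Summable fun j : ℕ => (3 / 2 : ℝ) * (‖x‖ * ‖q‖ ^ j) :=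
      ((summable_geometric_of_lt_one (norm_nonneg q) hq).mul_left _).mul_left _
    apply Summable.of_norm_bounded_eventually_nat hgeo
    have htend : Tendsto (fun j : ℕ => ‖x‖ * ‖q‖ ^ j) atTop (𝓝 0) := by
      simpa using (tendsto_pow_atTop_nhds_zero_of_lt_one (norm_nonneg q) hq).const_mul ‖x‖
    filter_upwards [htend.eventually_le_const (by norm_num : (0 : ℝ) < 1 / 2)] with j hj
    have hxq : ‖-(x * q ^ j)‖ ≤ 1 / 2 := by
      rwa [norm_neg, norm_mul, norm_pow]
    have := Complex.norm_log_one_add_half_le_self hxq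
    rw [show (1 : ℂ) + -(x * q ^ j) = 1 - x * q ^ j by ring] at this
    calc ‖Complex.log (1 - x * q ^ j)‖ ≤ 3 / 2 * ‖-(x * q ^ j)‖ := this
    _ = 3 / 2 * (‖x‖ * ‖q‖ ^ j) := by rw [norm_neg, norm_mul, norm_pow]
  constructor
  · exact (Complex.multipliable_of_summable_log hsum).hasProd
  · have := Complex.cexp_tsum_eq_tprod hne hsum
    rw [← this]
    exact Complex.exp_ne_zero _

/-- Euler's identity: for `‖q‖ < 1` and `‖x‖ < 1`,
`∑_{n≥0} xⁿ/(q;q)_n = 1/(x;q)_∞ = ∏_{j≥0} (1 − x qʲ)⁻¹`. -/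
theorem stmt13 (x q : ℂ) (hq : ‖q‖ < 1) (hx : ‖x‖ < 1) :
    ∑' n : ℕ, x ^ n / (∏ j ∈ Finset.range n, (1 - q ^ (j + 1)))
      = ∏' j : ℕ, (1 - x * q ^ j)⁻¹ := by
  set P : ℕ → ℂ := fun n => ∏ j ∈ Finset.range n, (1 - q ^ (j + 1)) with hP
  set S : ℂ → ℂ := fun y => ∑' n : ℕ, y ^ n / P n with hS
  have hPalt : ∀ n : ℕ, P n = ∏ j ∈ Finset.range n, (1 - q * q ^ j) := by
    intro n
    exact Finset.prod_congr rfl fun j _ => by rw [pow_succ']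
  obtain ⟨hQprod, hQne⟩ := euler_hasProd q q hq hq
  have hPtend : Tendsto (fun n => P n) atTop (𝓝 (∏' j : ℕ, (1 - q * q ^ j))) := by
    have := hQprod.tendsto_prod_nat
    simpa only [← hPalt] using this
  have hPne : ∀ n, P n ≠ 0 := by
    intro n
    rw [hPalt]
    exact Finset.prod_ne_zero_iff.2 fun j _ => euler_ne q q hq hq j
  -- uniform lower bound on ‖P n‖
  obtain ⟨c, hc, hcP⟩ : ∃ c : ℝ, 0 < c ∧ ∀ n, c ≤ ‖P n‖ := by
    set L := ∏' j : ℕ, (1 - q * q ^ j) with hL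
    have hLpos : 0 < ‖L‖ := norm_pos_iff.2 hQne
    have hev := (hPtend.norm).eventually (eventually_ge_nhds (show ‖L‖ / 2 < ‖L‖ by linarith))
    rw [eventually_atTop] at hev
    obtain ⟨N, hN⟩ := hev
    set F := (Finset.range (N + 1)).image fun n => ‖P n‖ with hF
    have hFne : F.Nonempty := ⟨‖P 0‖, Finset.mem_image.2 ⟨0, by simp, rfl⟩⟩
    refine ⟨min (‖L‖ / 2) (F.min' hFne), ?_, ?_⟩
    · apply lt_min (by linarith)
      obtain ⟨n, _, hmin⟩ := Finset.mem_image.1 (F.min'_mem hFne)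
      rw [← hmin]
      exact norm_pos_iff.2 (hPne n)
    · intro n
      rcases le_or_gt N n with h | h
      · exact le_trans (min_le_left _ _) (hN n h)
      · exact le_trans (min_le_right _ _)
          (F.min'_le _ (Finset.mem_image.2 ⟨n, Finset.mem_range.2 (by omega), rfl⟩))
  -- summability
  have hsummable : ∀ y : ℂ, ‖y‖ < 1 → Summable fun n : ℕ => y ^ n / P n := by
    intro y hy
    apply Summable.of_norm_bounded (g := fun n => c⁻¹ * ‖y‖ ^ n)
      ((summable_geometric_of_lt_one (norm_nonneg y) hy).mul_left _)
    intro n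
    rw [norm_div, norm_pow]
    calc ‖y‖ ^ n / ‖P n‖ ≤ ‖y‖ ^ n / c := by
          gcongr
          exact hcP n
    _ = c⁻¹ * ‖y‖ ^ n := by rw [div_eq_mul_inv, mul_comm]
  -- functional equation
  have hfun : ∀ y : ℂ, ‖y‖ < 1 → S (y * q) = (1 - y) * S y := by
    intro y hy
    have hyq : ‖y * q‖ < 1 := by
      calc ‖y * q‖ = ‖y‖ * ‖q‖ := norm_mul _ _
      _ ≤ 1 * ‖q‖ := by gcongr
      _ < 1 := by simpa using hq
    have hf := hsummable y hy
    set g : ℕ → ℂ := fun n => y ^ n * (1 - q ^ n) / P n with hg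
    have hg0 : g 0 = 0 := by simp [hg]
    have hgs : ∀ n : ℕ, g (n + 1) = y * (y ^ n / P n) := by
      intro n
      have h1 : P (n + 1) = P n * (1 - q ^ (n + 1)) := Finset.prod_range_succ _ _
      have h2 : (1 : ℂ) - q ^ (n + 1) ≠ 0 := by
        have := euler_ne q q hq hq n
        rwa [← pow_succ'] at this
      simp only [hg, h1]
      rw [mul_div_mul_right _ _ h2, pow_succ', mul_div_assoc]
    have hgsum : Summable g := by
      rw [← summable_nat_add_iff 1]
      simpa only [hgs] using hf.mul_left y
    have hgt : ∑' n, g n = y * S y := by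
      rw [Summable.tsum_eq_zero_add hgsum, hg0, zero_add]
      simp only [hgs]
      rw [tsum_mul_left]
    have key : ∀ n : ℕ, (y * q) ^ n / P n = y ^ n / P n - g n := by
      intro n
      simp only [hg, mul_pow]
      rw [div_sub_div_same]
      congr 1
      ring
    have h3 : S (y * q) = ∑' n, (y ^ n / P n - g n) := by
      simp only [hS]
      exact tsum_congr key
    rw [h3, Summable.tsum_sub hf hgsum, hgt]
    simp only [hS]
    ring
  -- iteration
  have hnormxq : ∀ N : ℕ, ‖x * q ^ N‖ < 1 := by
    intro N
    calc ‖x * q ^ N‖ = ‖x‖ * ‖q‖ ^ N := by rw [norm_mul, norm_pow]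
    _ ≤ ‖x‖ * 1 := by gcongr; exact pow_le_one₀ (norm_nonneg q) hq.le
    _ < 1 := by simpa using hx
  have hiter : ∀ N : ℕ, S (x * q ^ N) = (∏ j ∈ Finset.range N, (1 - x * q ^ j)) * S x := by
    intro N
    induction N with
    | zero => simp
    | succ N ih =>
      have := hfun (x * q ^ N) (hnormxq N)
      rw [show x * q ^ (N + 1) = x * q ^ N * q by ring, this, ih, Finset.prod_range_succ]
      ring
  -- the sum tends to 1 along x * q ^ N
  have hbound : ∀ y : ℂ, ‖y‖ ≤ ‖x‖ → ‖S y - 1‖ ≤ ‖y‖ * (c⁻¹ * (1 - ‖x‖)⁻¹) := by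
    intro y hy
    have hy1 : ‖y‖ < 1 := lt_of_le_of_lt hy hx
    have hf := hsummable y hy1
    have h1 : S y - 1 = ∑' n : ℕ, y ^ (n + 1) / P (n + 1) := by
      simp only [hS]
      rw [Summable.tsum_eq_zero_add hf]
      simp [hP]
    rw [h1]
    have hhs : HasSum (fun n : ℕ => ‖y‖ * c⁻¹ * ‖x‖ ^ n) (‖y‖ * c⁻¹ * (1 - ‖x‖)⁻¹) :=
      (hasSum_geometric_of_lt_one (norm_nonneg x) hx).mul_left _
    have hb : ∀ n : ℕ, ‖y ^ (n + 1) / P (n + 1)‖ ≤ ‖y‖ * c⁻¹ * ‖x‖ ^ n := by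
      intro n
      rw [norm_div, norm_pow]
      calc ‖y‖ ^ (n + 1) / ‖P (n + 1)‖ ≤ ‖y‖ ^ (n + 1) / c := by
            gcongr
            exact hcP _
      _ = ‖y‖ * ‖y‖ ^ n * c⁻¹ := by rw [pow_succ', div_eq_mul_inv]
      _ ≤ ‖y‖ * ‖x‖ ^ n * c⁻¹ := by
            gcongr
      _ = ‖y‖ * c⁻¹ * ‖x‖ ^ n := by ring
    calc ‖∑' n : ℕ, y ^ (n + 1) / P (n + 1)‖ ≤ ‖y‖ * c⁻¹ * (1 - ‖x‖)⁻¹ :=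
          tsum_of_norm_bounded hhs hb
    _ = ‖y‖ * (c⁻¹ * (1 - ‖x‖)⁻¹) := by ring
  have hto1 : Tendsto (fun N : ℕ => S (x * q ^ N)) atTop (𝓝 1) := by
    rw [tendsto_iff_norm_sub_tendsto_zero]
    apply squeeze_zero (fun n => norm_nonneg _)
      (g := fun N : ℕ => ‖x‖ * ‖q‖ ^ N * (c⁻¹ * (1 - ‖x‖)⁻¹))
    · intro N
      have := hbound (x * q ^ N) (by
        calc ‖x * q ^ N‖ = ‖x‖ * ‖q‖ ^ N := by rw [norm_mul, norm_pow]
        _ ≤ ‖x‖ * 1 := by gcongr; exact pow_le_one₀ (norm_nonneg q) hq.le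
        _ = ‖x‖ := mul_one _)
      rwa [norm_mul, norm_pow] at this
    · have h0 : Tendsto (fun N : ℕ => ‖x‖ * ‖q‖ ^ N) atTop (𝓝 0) := by
        simpa using (tendsto_pow_atTop_nhds_zero_of_lt_one (norm_nonneg q) hq).const_mul ‖x‖
      simpa using h0.mul_const (c⁻¹ * (1 - ‖x‖)⁻¹)
  -- conclude
  obtain ⟨hXprod, _⟩ := euler_hasProd x q hq hx
  set L' := ∏' j : ℕ, (1 - x * q ^ j) with hL'
  have h2 : Tendsto (fun N : ℕ => S (x * q ^ N)) atTop (𝓝 (L' * S x)) := by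
    simp only [hiter]
    exact hXprod.tendsto_prod_nat.mul_const _
  have hmain : L' * S x = 1 := tendsto_nhds_unique h2 hto1
  have hL'ne : L' ≠ 0 := left_ne_zero_of_mul_eq_one hmain
  have hSx : S x = L'⁻¹ := eq_inv_of_mul_eq_one_left (by rw [mul_comm]; exact hmain)
  have hinv : HasProd (fun j : ℕ => (1 - x * q ^ j)⁻¹) L'⁻¹ := by
    have ht : Tendsto (fun s : Finset ℕ => (∏ j ∈ s, (1 - x * q ^ j))⁻¹) atTop (𝓝 L'⁻¹) :=
      ((continuousAt_inv₀ hL'ne).tendsto).comp hXprod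
    simpa only [HasProd, SummationFilter.unconditional_filter, Finset.prod_inv_distrib] using ht
  rw [hinv.tprod_eq, ← hSx]
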